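/- In a CFG, suppose v' is a proper postdominator of v, let v'' = fppd(v), and assume v' ≠ v''. If v stays outside Q until v', then (i) v stays outside Q until v'', and (ii) v'' stays outside Q until v' (note that v' postdominates v''). -/

import Mathlib

namespace Slicing

/-- A path is a nonempty list of nodes, consecutive ones related by `succ`,
starting at `v` and ending at `v'`. -/
def IsPath {V : Type} (succ : V → V → Prop) (p : List V) (v v' : V) : Prop :=
  p.Chain' succ ∧ p.head? = some v ∧ p.getLast? = some v'

/-- A control-flow graph: an edge relation and an `End` node with no successors,
reachable from every node. -/
structure CFG (V : Type) where
  succ : V → V → Prop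
  End : V
  end_no_succ : ∀ w, ¬ succ End w
  reach_end : ∀ v, ∃ p, IsPath succ p v End

variable {V : Type}

/-- `v1` postdominates `v`. -/
def PD (G : CFG V) (v v1 : V) : Prop :=
  ∀ p, IsPath G.succ p v G.End → v1 ∈ p

/-- `v1` is a proper postdominator of `v`. -/
def ProperPD (G : CFG V) (v v1 : V) : Prop :=
  PD G v v1 ∧ v1 ≠ v

/-- `v1` is a first proper postdominator of `v`: every path from `v` to any other
proper postdominator of `v` contains `v1`. -/
def IsFPPD (G : CFG V) (v v1 : V) : Prop :=
  ProperPD G v v1 ∧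
    ∀ v2, ProperPD G v v2 → v2 ≠ v1 → ∀ p, IsPath G.succ p v v2 → v1 ∈ p

/-- Maximum number of edges of an acyclic path from `v` to `v'`. -/
noncomputable def LAP (G : CFG V) (v v' : V) : ℕ :=
  sSup {n | ∃ p, IsPath G.succ p v v' ∧ p.Nodup ∧ p.length = n + 1}

/-- A node is cycle-inducing if, with `v'` its first proper postdominator,
some successor `vi` of `v` satisfies `LAP vi v' ≥ LAP v v'`. -/
def CycleInducing (G : CFG V) (v : V) : Prop :=
  ∃ v', IsFPPD G v v' ∧ ∃ vi, G.succ v vi ∧ LAP G v v' ≤ LAP G vi v'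

/-- `v` stays outside `Q` until `v'`: every path from `v` to `v'` in which `v'`
occurs only at the final position contains no node of `Q` except possibly `v'`. -/
def StaysOutside (G : CFG V) (Q : Set V) (v v' : V) : Prop :=
  ∀ p, IsPath G.succ p v v' → v' ∉ p.dropLast → ∀ w ∈ p, w ∈ Q → w = v'

/-- `v2` is data dependent on `v1`. -/
def DataDep {Var : Type} (G : CFG V) (Def Use : V → Set Var) (v1 v2 : V) : Prop :=
  ∃ x, x ∈ Use v2 ∧ x ∈ Def v1 ∧
    ∃ p, IsPath G.succ p v1 v2 ∧ 2 ≤ p.length ∧ ∀ w ∈ p.tail.dropLast, x ∉ Def w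

/-- `Q` is closed under data dependence. -/
def ClosedDD {Var : Type} (G : CFG V) (Def Use : V → Set Var) (Q : Set V) : Prop :=
  ∀ v1 v2, v2 ∈ Q → DataDep G Def Use v1 v2 → v1 ∈ Q

/-- The `Q`-relevant variables at `v`. -/
def rv {Var : Type} (G : CFG V) (Def Use : V → Set Var) (Q : Set V) (v : V) : Set Var :=
  {x | ∃ v' ∈ Q, x ∈ Use v' ∧
    ∃ p, IsPath G.succ p v v' ∧ p.Nodup ∧ ∀ w ∈ p, w ≠ v' → x ∉ Def w}

/-- `v'` is a next visible in `Q` of `v`. -/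
def IsNextVisible (G : CFG V) (Q : Set V) (v v' : V) : Prop :=
  (v' ∈ Q ∨ v' = G.End) ∧
    ∀ u, (u ∈ Q ∨ u = G.End) → ∀ p, IsPath G.succ p v u → v' ∈ p

/-- `Q` provides next visibles. -/
def ProvidesNextVisibles (G : CFG V) (Q : Set V) : Prop :=
  ∀ v, ∃ v', IsNextVisible G Q v v'

/-- A weak slice set provides next visibles and is closed under data dependence. -/
def WeakSliceSet {Var : Type} (G : CFG V) (Def Use : V → Set Var) (Q : Set V) : Prop :=
  ProvidesNextVisibles G Q ∧ ClosedDD G Def Use Q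

end Slicing

namespace Slicing

variable {V : Type} {succ : V → V → Prop}

lemma IsPath.ne_nil' {p : List V} {a b : V} (h : IsPath succ p a b) : p ≠ [] := by
  intro hn; subst hn; simp [IsPath] at h

lemma exists_first_split {p : List V} {x : V} (h : x ∈ p) :
    ∃ s t, p = s ++ x :: t ∧ x ∉ s := by
  induction p with
  | nil => simp at h
  | cons a l ih =>
    by_cases hax : a = x
    · exact ⟨[], l, by simp [hax], by simp⟩
    · have hx : x ∈ l := by
        rcases List.mem_cons.mp h with h1 | h1
        · exact absurd h1.symm hax
        · exact h1
      obtain ⟨s, t, hst, hxs⟩ := ih hx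
      refine ⟨a :: s, t, by simp [hst], ?_⟩
      simp only [List.mem_cons, not_or]
      exact ⟨fun h => hax h.symm, hxs⟩

lemma isPath_split {p s t : List V} {x a c : V} (hp : IsPath succ p a c)
    (h : p = s ++ x :: t) :
    IsPath succ (s ++ [x]) a x ∧ IsPath succ (x :: t) x c := by
  obtain ⟨hc, hh, hl⟩ := hp
  subst h
  have hrw : s ++ x :: t = (s ++ [x]) ++ t := by simp
  constructor
  · refine ⟨hc.prefix ⟨t, hrw.symm⟩, ?_, List.getLast?_concat⟩
    rw [List.head?_append] at hh ⊢
    simpa using hh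
  · refine ⟨hc.suffix ⟨s, rfl⟩, rfl, ?_⟩
    rw [List.getLast?_append] at hl
    rw [List.getLast?_eq_getLast (by simp : (x :: t) ≠ [])] at hl ⊢
    simpa using hl

lemma isPath_join {p q : List V} {a m b : V} (hp : IsPath succ p a m)
    (hq : IsPath succ q m b) : IsPath succ (p.dropLast ++ q) a b := by
  obtain ⟨hc, hh, hl⟩ := hp
  obtain ⟨hc', hh', hl'⟩ := hq
  have hpne : p ≠ [] := by intro h; subst h; simp at hh
  have hplast : p.getLast hpne = m := by
    rw [List.getLast?_eq_getLast hpne] at hl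
    exact Option.some_injective _ hl
  have hdec : p.dropLast ++ [m] = p := by
    rw [← hplast]; exact List.dropLast_append_getLast hpne
  have hqne : q ≠ [] := by intro h; subst h; simp at hh'
  refine ⟨?_, ?_, ?_⟩
  · rw [← hdec] at hc
    simp only [List.Chain'] at hc ⊢
    rw [List.isChain_append] at hc ⊢
    refine ⟨hc.1, hc', fun x hx y hy => ?_⟩
    have hym : m = y := by
      rw [Option.mem_def, hh'] at hy
      exact Option.some_injective _ hy
    rw [← hym]
    exact hc.2.2 x hx m rfl
  · rcases eq_or_ne p.dropLast [] with h0 | h0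
    · have hpm : p = [m] := by rw [← hdec, h0]; simp
      rw [hpm] at hh
      have ham : a = m := by simpa using hh.symm
      rw [h0, List.nil_append, hh', ham]
    · rw [List.head?_append, List.head?_eq_head h0]
      rw [← hdec, List.head?_append, List.head?_eq_head h0] at hh
      simpa using hh
  · rw [List.getLast?_append, hl']
    simp

lemma mem_join {p q : List V} {m : V} (hl : p.getLast? = some m)
    (hh : q.head? = some m) {w : V} (hw : w ∈ p) : w ∈ p.dropLast ++ q := by
  have hpne : p ≠ [] := by intro h; subst h; simp at hl
  have hplast : p.getLast hpne = m := by
    rw [List.getLast?_eq_getLast hpne] at hl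
    exact Option.some_injective _ hl
  have hdec : p.dropLast ++ [m] = p := by
    rw [← hplast]; exact List.dropLast_append_getLast hpne
  rw [← hdec] at hw
  rcases List.mem_append.mp hw with h | h
  · exact List.mem_append.mpr (Or.inl h)
  · have : w = m := by simpa using h
    subst this
    exact List.mem_append.mpr (Or.inr (List.mem_of_mem_head? (by rw [hh]; rfl)))

end Slicing


namespace Slicing

/-- Decomposition of "stays outside": if `v'` is a proper postdominator of `v`,
`v''` is the first proper postdominator of `v`, `v' ≠ v''`, and `v` stays outside
`Q` until `v'`, then `v` stays outside `Q` until `v''` and `v''` stays outside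
`Q` until `v'`. -/
theorem staysOutside_decomp {V : Type} [Fintype V] (G : CFG V) (Q : Set V)
    (v v' v'' : V) (hpd : ProperPD G v v') (hf : IsFPPD G v v'')
    (hne : v' ≠ v'') (hso : StaysOutside G Q v v') :
    StaysOutside G Q v v'' ∧ StaysOutside G Q v'' v' := by
  obtain ⟨hpdv', hne'⟩ := hpd
  obtain ⟨⟨hpdv'', hne''⟩, hfp⟩ := hf
  -- A path s0 from v to v'' avoiding v'
  obtain ⟨r, hr⟩ := G.reach_end v
  have hv'r : v' ∈ r := hpdv' r hr
  obtain ⟨a, bb, hab, hv'a⟩ := exists_first_split hv'r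
  obtain ⟨hr1, -⟩ := isPath_split hr hab
  have hv''r1 : v'' ∈ a ++ [v'] := hfp v' ⟨hpdv', hne'⟩ hne _ hr1
  have hv''a : v'' ∈ a := by
    rcases List.mem_append.mp hv''r1 with h | h
    · exact h
    · simp only [List.mem_singleton] at h
      exact absurd h.symm hne
  obtain ⟨a1, a2, ha12, hv''a1⟩ := exists_first_split hv''a
  have hsplit : a ++ [v'] = a1 ++ v'' :: (a2 ++ [v']) := by simp [ha12]
  obtain ⟨hs0, -⟩ := isPath_split hr1 hsplit
  have hv's0 : v' ∉ a1 ++ [v''] := by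
    intro h
    rcases List.mem_append.mp h with h | h
    · exact hv'a (by rw [ha12]; exact List.mem_append.mpr (Or.inl h))
    · exact hne (by simpa using h)
  -- B path t0 from v'' to v' with v' only at the end
  obtain ⟨r2, hr2⟩ := G.reach_end v''
  have hjoin : IsPath G.succ ((a1 ++ [v'']).dropLast ++ r2) v G.End := isPath_join hs0 hr2
  have hv'r2 : v' ∈ r2 := by
    rcases List.mem_append.mp (hpdv' _ hjoin) with h | h
    · exact absurd (List.Sublist.mem h (List.dropLast_sublist _)) hv's0
    · exact h
  obtain ⟨c, dd, hcd, hv'c⟩ := exists_first_split hv'r2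
  obtain ⟨ht, -⟩ := isPath_split hr2 hcd
  have htd : v' ∉ (c ++ [v']).dropLast := by
    rw [List.dropLast_concat]; exact hv'c
  have htne : c ++ [v'] ≠ [] := by simp
  constructor
  · -- v stays outside Q until v''
    intro p hp hpd' w hw hwQ
    have hv'p : v' ∉ p := by
      intro hmem
      obtain ⟨s1, s2, h12, hv's1⟩ := exists_first_split hmem
      obtain ⟨hpref, -⟩ := isPath_split hp h12
      have hv''pref : v'' ∈ s1 ++ [v'] := hfp v' ⟨hpdv', hne'⟩ hne _ hpref
      have hv''s1 : v'' ∈ s1 := by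
        rcases List.mem_append.mp hv''pref with h | h
        · exact h
        · simp only [List.mem_singleton] at h
          exact absurd h.symm hne
      apply hpd'
      rw [h12, List.dropLast_append_of_ne_nil (by simp : (v' :: s2 : List V) ≠ [])]
      exact List.mem_append.mpr (Or.inl hv''s1)
    have hP : IsPath G.succ (p.dropLast ++ (c ++ [v'])) v v' := isPath_join hp ht
    have hPd : v' ∉ (p.dropLast ++ (c ++ [v'])).dropLast := by
      rw [List.dropLast_append_of_ne_nil htne]
      intro h
      rcases List.mem_append.mp h with h | h
      · exact hv'p (List.Sublist.mem h (List.dropLast_sublist _))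
      · exact htd h
    have hwv' : w = v' := hso _ hP hPd w (mem_join hp.2.2 ht.2.1 hw) hwQ
    exact (hv'p (hwv' ▸ hw)).elim
  · -- v'' stays outside Q until v'
    intro q hq hqd w hw hwQ
    have hP : IsPath G.succ ((a1 ++ [v'']).dropLast ++ q) v v' := isPath_join hs0 hq
    have hqne : q ≠ [] := hq.ne_nil'
    have hPd : v' ∉ ((a1 ++ [v'']).dropLast ++ q).dropLast := by
      rw [List.dropLast_append_of_ne_nil hqne]
      intro h
      rcases List.mem_append.mp h with h | h
      · exact hv's0 (List.Sublist.mem h (List.dropLast_sublist _))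
      · exact hqd h
    exact hso _ hP hPd w (List.mem_append.mpr (Or.inr hw)) hwQ


end Slicing
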